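/- Let l1, l2 be positive integers, Γ^{(1)}, Γ^{(2)} check node degree distributions supported on even degrees ≥ 2, with Γ^{(j)}(1) = 1. Define θ(e) = (1 − l1 − l2) h(e) + (l1/Γ^{(1)'}(1)) Σ_r Γ^{(1)}_r log q_r(v_1(e)) + (l2/Γ^{(2)'}(1)) Σ_r Γ^{(2)}_r log q_r(v_2(e)) − e l1 log v_1(e) − e l2 log v_2(e) − R_des, where h is the binary entropy function, q_r(v) = ((1+v)^r + (1−v)^r)/2, and v_j(e) is the unique positive solution of the saddle point equation (v/Γ^{(j)'}(1)) Σ_r r Γ^{(j)}_r ((1+v)^{r−1} − (1−v)^{r−1})/((1+v)^r + (1−v)^r) = e. Then θ(1−e) = θ(e) for all e ∈ (0,1). -/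

import Mathlib

private theorem termA (v : ℝ) (hv : 0 < v) (k : ℕ) (hk : Odd k) :
    ((1+1/v)^k - (1-1/v)^k) / ((1+1/v)^(k+1) + (1-1/v)^(k+1))
    = v * (((1+v)^k + (1-v)^k) / ((1+v)^(k+1) + (1-v)^(k+1))) := by
  have hv0 : v ≠ 0 := hv.ne'
  have h1 : (1+1/v) = (1+v)/v := by field_simp; ring
  have h2 : (1-1/v) = -((1-v)/v) := by field_simp; ring
  have hek : Even (k+1) := by simpa using hk.add_one
  rw [h1, h2, hk.neg_pow, hek.neg_pow, div_pow, div_pow, div_pow, div_pow]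
  rw [sub_neg_eq_add, ← add_div, ← add_div, div_div_div_comm]
  have hvk : v^k / v^(k+1) = 1/v := by rw [pow_succ]; field_simp
  rw [hvk, div_div_eq_mul_div, div_one, mul_comm, pow_succ]

private theorem termB (v : ℝ) (hv : 0 < v) (k : ℕ) (hk : Odd k) :
    ((1+v)^k + (1-v)^k) / ((1+v)^(k+1) + (1-v)^(k+1))
    = 1 - v * (((1+v)^k - (1-v)^k) / ((1+v)^(k+1) + (1-v)^(k+1))) := by
  have hek : Even (k+1) := by simpa using hk.add_one
  have hD : 0 < (1+v)^(k+1) + (1-v)^(k+1) :=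
    add_pos_of_pos_of_nonneg (pow_pos (by linarith) _) (hek.pow_nonneg _)
  field_simp
  ring

private theorem saddle_flip (Γ : ℕ → ℝ) (hfin : (Function.support Γ).Finite)
    (hdeg : ∀ r, Γ r ≠ 0 → 2 ≤ r ∧ Even r)
    (hG : 0 < ∑ᶠ (r : ℕ), (r : ℝ) * Γ r)
    (v : ℝ) (hv : 0 < v) (e : ℝ)
    (heq : (v / ∑ᶠ (r : ℕ), (r : ℝ) * Γ r) *
        (∑ᶠ (r : ℕ), (r : ℝ) * Γ r *
          (((1 + v) ^ (r - 1) - (1 - v) ^ (r - 1)) / ((1 + v) ^ r + (1 - v) ^ r))) = e) :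
    ((1/v) / ∑ᶠ (r : ℕ), (r : ℝ) * Γ r) *
        (∑ᶠ (r : ℕ), (r : ℝ) * Γ r *
          (((1 + 1/v) ^ (r - 1) - (1 - 1/v) ^ (r - 1)) /
            ((1 + 1/v) ^ r + (1 - 1/v) ^ r))) = 1 - e := by
  set G := ∑ᶠ (r : ℕ), (r : ℝ) * Γ r with hGdef
  have hGne : G ≠ 0 := hG.ne'
  have hv0 : v ≠ 0 := hv.ne'
  have hpoint : ∀ r : ℕ, (r : ℝ) * Γ r *
      (((1 + 1/v) ^ (r - 1) - (1 - 1/v) ^ (r - 1)) / ((1 + 1/v) ^ r + (1 - 1/v) ^ r))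
      = v * ((r : ℝ) * Γ r) - v * (v * ((r : ℝ) * Γ r *
          (((1 + v) ^ (r - 1) - (1 - v) ^ (r - 1)) / ((1 + v) ^ r + (1 - v) ^ r)))) := by
    intro r
    by_cases hΓ : Γ r = 0
    · simp [hΓ]
    · obtain ⟨h2, hev⟩ := hdeg r hΓ
      obtain ⟨k, hk⟩ : ∃ k, r = k + 1 := ⟨r - 1, by omega⟩
      have hkodd : Odd k := by
        rcases Nat.even_or_odd k with h | h
        · exact absurd (by simpa [hk] using hev) (by simp [Nat.even_add_one, h])
        · exact h
      subst hk
      simp only [Nat.add_sub_cancel]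
      rw [termA v hv k hkodd, termB v hv k hkodd]
      ring
  rw [finsum_congr hpoint]
  have hs1 : (Function.support fun r : ℕ => v * ((r : ℝ) * Γ r)).Finite := by
    apply hfin.subset
    intro r hr
    simp only [Function.mem_support] at hr ⊢
    intro h; apply hr; simp [h]
  have hs2 : (Function.support fun r : ℕ => v * (v * ((r : ℝ) * Γ r *
      (((1 + v) ^ (r - 1) - (1 - v) ^ (r - 1)) / ((1 + v) ^ r + (1 - v) ^ r))))).Finite := by
    apply hfin.subset
    intro r hr
    simp only [Function.mem_support] at hr ⊢
    intro h; apply hr; simp [h]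
  rw [finsum_sub_distrib hs1 hs2, ← mul_finsum _ _,
    ← mul_finsum _ _,
    ← mul_finsum _ _]
  rw [← hGdef]
  have : (1/v)/G * (v * G - v * (v * (∑ᶠ (r : ℕ), (r : ℝ) * Γ r *
      (((1 + v) ^ (r - 1) - (1 - v) ^ (r - 1)) / ((1 + v) ^ r + (1 - v) ^ r)))))
      = 1 - (v/G) * (∑ᶠ (r : ℕ), (r : ℝ) * Γ r *
      (((1 + v) ^ (r - 1) - (1 - v) ^ (r - 1)) / ((1 + v) ^ r + (1 - v) ^ r))) := by
    field_simp
  rw [this, heq]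

private theorem qlog (v : ℝ) (hv : 0 < v) (r : ℕ) (he : Even r) :
    Real.log (((1+1/v)^r + (1-1/v)^r)/2)
    = Real.log (((1+v)^r + (1-v)^r)/2) - r * Real.log v := by
  have hv0 : v ≠ 0 := hv.ne'
  have h1 : (1+1/v) = (1+v)/v := by field_simp; ring
  have h2 : (1-1/v) = -((1-v)/v) := by field_simp; ring
  have hQ : 0 < (1+v)^r + (1-v)^r :=
    add_pos_of_pos_of_nonneg (pow_pos (by linarith) _) (he.pow_nonneg _)
  have key : ((1+1/v)^r + (1-1/v)^r)/2 = (((1+v)^r + (1-v)^r)/2) / v^r := by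
    rw [h1, h2, he.neg_pow, div_pow, div_pow, ← add_div]
    ring
  rw [key, Real.log_div (by positivity) (by positivity), Real.log_pow]

private theorem qsum (Γ : ℕ → ℝ) (hfin : (Function.support Γ).Finite)
    (hdeg : ∀ r, Γ r ≠ 0 → 2 ≤ r ∧ Even r)
    (v : ℝ) (hv : 0 < v) :
    (∑ᶠ (r : ℕ), Γ r * Real.log (((1 + 1/v) ^ r + (1 - 1/v) ^ r) / 2))
    = (∑ᶠ (r : ℕ), Γ r * Real.log (((1 + v) ^ r + (1 - v) ^ r) / 2))
      - (∑ᶠ (r : ℕ), (r : ℝ) * Γ r) * Real.log v := by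
  have hpoint : ∀ r : ℕ, Γ r * Real.log (((1 + 1/v) ^ r + (1 - 1/v) ^ r) / 2)
      = Γ r * Real.log (((1 + v) ^ r + (1 - v) ^ r) / 2)
        - ((r : ℝ) * Γ r) * Real.log v := by
    intro r
    by_cases hΓ : Γ r = 0
    · simp [hΓ]
    · rw [qlog v hv r (hdeg r hΓ).2]
      ring
  have hs1 : (Function.support fun r : ℕ =>
      Γ r * Real.log (((1 + v) ^ r + (1 - v) ^ r) / 2)).Finite :=
    hfin.subset (fun r hr => by
      simp only [Function.mem_support] at hr ⊢; intro h; apply hr; simp [h])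
  have hs2 : (Function.support fun r : ℕ => (r : ℝ) * Γ r * Real.log v).Finite :=
    hfin.subset (fun r hr => by
      simp only [Function.mem_support] at hr ⊢; intro h; apply hr; simp [h])
  have hs3 : (Function.support fun r : ℕ => (r : ℝ) * Γ r).Finite :=
    hfin.subset (fun r hr => by
      simp only [Function.mem_support] at hr ⊢; intro h; apply hr; simp [h])
  rw [finsum_congr hpoint, finsum_sub_distrib hs1 hs2, finsum_mul]

/-- For a left regular two edge type ensemble whose check node degree
distributions `Γ⁽¹⁾, Γ⁽²⁾` are supported on even degrees `≥ 2`, the growth-rate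
function `θ` satisfies the symmetry `θ(1-e) = θ(e)` for all `e ∈ (0,1)`. -/
theorem theta_symmetry_even_checks
    (l1 l2 : ℕ) (hl1 : 0 < l1) (hl2 : 0 < l2)
    (Γ1 Γ2 : ℕ → ℝ) (Rdes : ℝ)
    (h1nonneg : ∀ r, 0 ≤ Γ1 r) (h2nonneg : ∀ r, 0 ≤ Γ2 r)
    (h1fin : (Function.support Γ1).Finite) (h2fin : (Function.support Γ2).Finite)
    (h1sum : ∑ᶠ r, Γ1 r = 1) (h2sum : ∑ᶠ r, Γ2 r = 1)
    (h1deg : ∀ r, Γ1 r ≠ 0 → 2 ≤ r ∧ Even r)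
    (h2deg : ∀ r, Γ2 r ≠ 0 → 2 ≤ r ∧ Even r)
    (h1Γ' : 0 < ∑ᶠ (r : ℕ), (r : ℝ) * Γ1 r)
    (h2Γ' : 0 < ∑ᶠ (r : ℕ), (r : ℝ) * Γ2 r)
    (V1 V2 : ℝ → ℝ)
    -- V j is the unique positive solution of the saddle point equation for Γ j
    (hV1 : ∀ e ∈ Set.Ioo (0 : ℝ) 1,
      0 < V1 e ∧
      (V1 e / ∑ᶠ (r : ℕ), (r : ℝ) * Γ1 r) *
        (∑ᶠ (r : ℕ), (r : ℝ) * Γ1 r *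
          (((1 + V1 e) ^ (r - 1) - (1 - V1 e) ^ (r - 1)) /
            ((1 + V1 e) ^ r + (1 - V1 e) ^ r))) = e ∧
      ∀ w, 0 < w →
        (w / ∑ᶠ (r : ℕ), (r : ℝ) * Γ1 r) *
          (∑ᶠ (r : ℕ), (r : ℝ) * Γ1 r *
            (((1 + w) ^ (r - 1) - (1 - w) ^ (r - 1)) / ((1 + w) ^ r + (1 - w) ^ r))) = e
        → w = V1 e)
    (hV2 : ∀ e ∈ Set.Ioo (0 : ℝ) 1,
      0 < V2 e ∧
      (V2 e / ∑ᶠ (r : ℕ), (r : ℝ) * Γ2 r) *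
        (∑ᶠ (r : ℕ), (r : ℝ) * Γ2 r *
          (((1 + V2 e) ^ (r - 1) - (1 - V2 e) ^ (r - 1)) /
            ((1 + V2 e) ^ r + (1 - V2 e) ^ r))) = e ∧
      ∀ w, 0 < w →
        (w / ∑ᶠ (r : ℕ), (r : ℝ) * Γ2 r) *
          (∑ᶠ (r : ℕ), (r : ℝ) * Γ2 r *
            (((1 + w) ^ (r - 1) - (1 - w) ^ (r - 1)) / ((1 + w) ^ r + (1 - w) ^ r))) = e
        → w = V2 e) :
    (let h : ℝ → ℝ := fun e => -(e * Real.log e) - (1 - e) * Real.log (1 - e)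
     let q : ℕ → ℝ → ℝ := fun r w => ((1 + w) ^ r + (1 - w) ^ r) / 2
     let θ : ℝ → ℝ := fun e =>
       (1 - (l1 : ℝ) - (l2 : ℝ)) * h e
       + ((l1 : ℝ) / ∑ᶠ (r : ℕ), (r : ℝ) * Γ1 r) *
           (∑ᶠ (r : ℕ), Γ1 r * Real.log (q r (V1 e)))
       + ((l2 : ℝ) / ∑ᶠ (r : ℕ), (r : ℝ) * Γ2 r) *
           (∑ᶠ (r : ℕ), Γ2 r * Real.log (q r (V2 e)))
       - e * (l1 : ℝ) * Real.log (V1 e) - e * (l2 : ℝ) * Real.log (V2 e) - Rdes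
     ∀ e ∈ Set.Ioo (0 : ℝ) 1, θ (1 - e) = θ e) := by
  intro h q θ e he
  obtain ⟨he0, he1⟩ := he
  have he' : (1:ℝ) - e ∈ Set.Ioo (0:ℝ) 1 := ⟨by linarith, by linarith⟩
  obtain ⟨hv1pos, hv1eq, _⟩ := hV1 e ⟨he0, he1⟩
  obtain ⟨hv2pos, hv2eq, _⟩ := hV2 e ⟨he0, he1⟩
  have hflip1 : V1 (1 - e) = 1 / V1 e :=
    ((hV1 (1 - e) he').2.2 (1 / V1 e) (by positivity)
      (saddle_flip Γ1 h1fin h1deg h1Γ' (V1 e) hv1pos e hv1eq)).symm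
  have hflip2 : V2 (1 - e) = 1 / V2 e :=
    ((hV2 (1 - e) he').2.2 (1 / V2 e) (by positivity)
      (saddle_flip Γ2 h2fin h2deg h2Γ' (V2 e) hv2pos e hv2eq)).symm
  simp only [θ, h, q]
  rw [hflip1, hflip2]
  have h1me : (1:ℝ) - (1 - e) = e := by ring
  rw [h1me, qsum Γ1 h1fin h1deg (V1 e) hv1pos, qsum Γ2 h2fin h2deg (V2 e) hv2pos,
    one_div, one_div, Real.log_inv, Real.log_inv]
  have expand : ∀ (l G S L : ℝ), G ≠ 0 → (l/G) * (S - G*L) = (l/G)*S - l*L := by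
    intro l G S L hG; field_simp
  rw [expand _ _ _ _ h1Γ'.ne', expand _ _ _ _ h2Γ'.ne']
  ring
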